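/- (Higher-order differential equation for Sobolev orthogonal polynomials.) For every n ≥ m one has s̃_n + Σ_{l=1}^{m} χ_l·Δ^{2l}s̃_n = Δ^m p_{n+m} + Σ_{l=1}^{2m} (⟨s̃_n, 𝒢^m p_{n+m−l}⟩_{S^m}/‖p_{n+m−l}‖₂²)·Δ^m p_{n+m−l}. -/
import Mathlib


open Filter RealInnerProductSpace

variable {H : Type*} [NormedAddCommGroup H] [InnerProductSpace ℝ H]

/-- `Wlt P n` is the span of `P 0, …, P (n-1)`; thus `Wlt P 0 = ⊥ = W_{-1}` and
`Wlt P (n+1)` is the space `W_n = span{P_0, …, P_n}`. -/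
def Wlt (P : ℕ → H) (n : ℕ) : Submodule ℝ H := Submodule.span ℝ (P '' Set.Iio n)

/-- `Wtot P` is the space `W = ⋃ₙ Wₙ` of all polynomials. -/
def Wtot (P : ℕ → H) : Submodule ℝ H := Submodule.span ℝ (Set.range P)

/-- The order-`m` Sobolev inner product `⟨f, g⟩_{Sᵐ} = Σ_{ℓ=0}^m χ_ℓ ⟨Δ^ℓ f, Δ^ℓ g⟩₂`. -/
noncomputable def innerSm (Δ : H →ₗ[ℝ] H) (χ : ℕ → ℝ) (m : ℕ) (f g : H) : ℝ :=
  ∑ ℓ ∈ Finset.range (m + 1), χ ℓ * ⟪ (Δ ^ ℓ) f, (Δ ^ ℓ) g ⟫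

section Aux18
variable {P : ℕ → H} {Δ G : H →ₗ[ℝ] H}

lemma Wlt_mono {a b : ℕ} (h : a ≤ b) : Wlt P a ≤ Wlt P b :=
  Submodule.span_mono (Set.image_mono (fun x hx => lt_of_lt_of_le hx h))

lemma P_mem_Wlt (j : ℕ) : P j ∈ Wlt P (j+1) :=
  Submodule.subset_span ⟨j, by simp, rfl⟩

lemma Wlt_le_Wtot (k : ℕ) : Wlt P k ≤ Wtot P :=
  Submodule.span_mono (by rintro x ⟨j, _, rfl⟩; exact ⟨j, rfl⟩)

lemma P_notMem_Wlt (hP : LinearIndependent ℝ P) (j : ℕ) : P j ∉ Wlt P j :=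
  hP.notMem_span_image (by simp)

lemma Delta_Wlt (hΔ0 : Δ (P 0) = 0) (hΔsucc : ∀ n, Δ (P (n + 1)) = P n)
    (k : ℕ) {u : H} (hu : u ∈ Wlt P (k+1)) : Δ u ∈ Wlt P k := by
  induction hu using Submodule.span_induction with
  | mem x hx =>
      obtain ⟨j, hj, rfl⟩ := hx
      cases j with
      | zero => simpa [hΔ0] using (Wlt P k).zero_mem
      | succ i =>
          rw [hΔsucc]
          exact Submodule.subset_span ⟨i, by simp at hj ⊢; omega, rfl⟩
  | zero => simp
  | add x y _ _ hx hy => simpa [map_add] using add_mem hx hy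
  | smul c x _ hx => simpa [map_smul] using Submodule.smul_mem _ c hx

lemma Deltapow_Wlt (hΔ0 : Δ (P 0) = 0) (hΔsucc : ∀ n, Δ (P (n + 1)) = P n)
    (l : ℕ) : ∀ (k : ℕ) {u : H}, u ∈ Wlt P (k + l) → (Δ ^ l) u ∈ Wlt P k := by
  induction l with
  | zero => intro k u hu; simpa using hu
  | succ l ih =>
      intro k u hu
      rw [pow_succ, Module.End.mul_apply]
      exact ih k (Delta_Wlt hΔ0 hΔsucc (k + l) hu)

lemma G_Wlt (hGmap : ∀ n, ∀ u ∈ Wlt P (n + 1), G u ∈ Wlt P (n + 2)) :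
    ∀ (k : ℕ) {u : H}, u ∈ Wlt P k → G u ∈ Wlt P (k+1) := by
  intro k u hu
  cases k with
  | zero =>
      have he : (Set.Iio 0 : Set ℕ) = ∅ := by ext x; simp
      rw [Wlt, he, Set.image_empty, Submodule.span_empty, Submodule.mem_bot] at hu
      simp [hu]
  | succ n => exact hGmap n u hu

lemma Gpow_Wlt (hGmap : ∀ n, ∀ u ∈ Wlt P (n + 1), G u ∈ Wlt P (n + 2)) (j : ℕ) :
    ∀ (k : ℕ) {u : H}, u ∈ Wlt P k → (G ^ j) u ∈ Wlt P (k + j) := by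
  induction j with
  | zero => intro k u hu; simpa using hu
  | succ j ih =>
      intro k u hu
      rw [pow_succ', Module.End.mul_apply]
      exact G_Wlt hGmap (k + j) (ih k hu)

lemma exists_Wlt {u : H} (hu : u ∈ Wtot P) : ∃ N, u ∈ Wlt P N := by
  induction hu using Submodule.span_induction with
  | mem x hx => obtain ⟨j, rfl⟩ := hx; exact ⟨j + 1, P_mem_Wlt j⟩
  | zero => exact ⟨0, zero_mem _⟩
  | add x y _ _ hx hy =>
      obtain ⟨N₁, h₁⟩ := hx; obtain ⟨N₂, h₂⟩ := hy
      exact ⟨max N₁ N₂, add_mem (Wlt_mono (le_max_left _ _) h₁)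
        (Wlt_mono (le_max_right _ _) h₂)⟩
  | smul c x _ hx => obtain ⟨N, h⟩ := hx; exact ⟨N, Submodule.smul_mem _ c h⟩

lemma Gpow_Wtot (hGmap : ∀ n, ∀ u ∈ Wlt P (n + 1), G u ∈ Wlt P (n + 2)) (j : ℕ)
    {u : H} (hu : u ∈ Wtot P) : (G ^ j) u ∈ Wtot P := by
  obtain ⟨N, hN⟩ := exists_Wlt hu
  exact Wlt_le_Wtot _ (Gpow_Wlt hGmap j N hN)

lemma Deltapow_Wtot (hΔ0 : Δ (P 0) = 0) (hΔsucc : ∀ n, Δ (P (n + 1)) = P n) (l : ℕ)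
    {u : H} (hu : u ∈ Wtot P) : (Δ ^ l) u ∈ Wtot P := by
  obtain ⟨N, hN⟩ := exists_Wlt hu
  exact Wlt_le_Wtot _ (Deltapow_Wlt hΔ0 hΔsucc l N (Wlt_mono (by omega) hN))

lemma DGpow (hGmap : ∀ n, ∀ u ∈ Wlt P (n + 1), G u ∈ Wlt P (n + 2))
    (hGinv : ∀ u ∈ Wtot P, Δ (G u) = u) :
    ∀ (k : ℕ), ∀ u ∈ Wtot P, (Δ ^ k) ((G ^ k) u) = u := by
  intro k
  induction k with
  | zero => intro u _; simp
  | succ k ih =>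
      intro u hu
      have h1 : (G ^ (k+1)) u = G ((G ^ k) u) := by rw [pow_succ']; rfl
      have h2 : ∀ x, (Δ ^ (k+1)) x = (Δ ^ k) (Δ x) := by intro x; rw [pow_succ]; rfl
      rw [h1, h2, hGinv _ (Gpow_Wtot hGmap k hu)]
      exact ih u hu

lemma DGpow_le (hGmap : ∀ n, ∀ u ∈ Wlt P (n + 1), G u ∈ Wlt P (n + 2))
    (hGinv : ∀ u ∈ Wtot P, Δ (G u) = u) {l m : ℕ} (hlm : l ≤ m)
    {u : H} (hu : u ∈ Wtot P) : (Δ ^ l) ((G ^ m) u) = (G ^ (m - l)) u := by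
  have h : G ^ m = G ^ l * G ^ (m - l) := by rw [← pow_add]; congr 1; omega
  rw [h, Module.End.mul_apply, DGpow hGmap hGinv l _ (Gpow_Wtot hGmap (m - l) hu)]

lemma Gsym_pow (hGmap : ∀ n, ∀ u ∈ Wlt P (n + 1), G u ∈ Wlt P (n + 2))
    (hGsym : ∀ u ∈ Wtot P, ∀ v ∈ Wtot P, ⟪ G u, v ⟫ = ⟪ u, G v ⟫) :
    ∀ (k : ℕ), ∀ u ∈ Wtot P, ∀ v ∈ Wtot P, ⟪ (G ^ k) u, v ⟫ = ⟪ u, (G ^ k) v ⟫ := by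
  intro k
  induction k with
  | zero => intro u _ v _; simp
  | succ k ih =>
      intro u hu v hv
      have hGv : G v ∈ Wtot P := by
        have := Gpow_Wtot hGmap 1 hv; simpa using this
      have h1 : (G ^ (k+1)) u = G ((G ^ k) u) := by rw [pow_succ']; rfl
      have h2 : (G ^ (k+1)) v = (G ^ k) (G v) := by rw [pow_succ]; rfl
      rw [h1, h2, hGsym _ (Gpow_Wtot hGmap k hu) v hv, ih u hu (G v) hGv]

lemma G_monic (hP : LinearIndependent ℝ P)
    (hΔ0 : Δ (P 0) = 0) (hΔsucc : ∀ n, Δ (P (n + 1)) = P n)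
    (hGinv : ∀ u ∈ Wtot P, Δ (G u) = u)
    (hGmap : ∀ n, ∀ u ∈ Wlt P (n + 1), G u ∈ Wlt P (n + 2))
    (k : ℕ) {w : H} (hw : w ∈ Wlt P (k+1)) (hwm : w - P k ∈ Wlt P k) :
    G w - P (k+1) ∈ Wlt P (k+1) := by
  have hGw : G w ∈ Wlt P (k+2) := G_Wlt hGmap (k+1) hw
  have hins : (Set.Iio (k+2) : Set ℕ) = insert (k+1) (Set.Iio (k+1)) := by
    ext x; simp; omega
  rw [Wlt, hins, Set.image_insert_eq, Submodule.mem_span_insert] at hGw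
  obtain ⟨c, z, hz, hGweq⟩ := hGw
  have hz' : z ∈ Wlt P (k+1) := hz
  have hΔGw : Δ (G w) = w := hGinv w (Wlt_le_Wtot (k+1) hw)
  have hweq : w = c • P k + Δ z := by
    rw [← hΔGw, hGweq, map_add, map_smul, hΔsucc]
  have hΔz : Δ z ∈ Wlt P k := Delta_Wlt hΔ0 hΔsucc k hz'
  have hc : c = 1 := by
    by_contra hne
    have h1 : (c - 1) • P k ∈ Wlt P k := by
      have : (c - 1) • P k = (w - P k) - Δ z := by
        rw [hweq]; module
      rw [this]; exact sub_mem hwm hΔz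
    have : P k ∈ Wlt P k := by
      have := Submodule.smul_mem _ (c - 1)⁻¹ h1
      rwa [smul_smul, inv_mul_cancel₀ (sub_ne_zero.mpr hne), one_smul] at this
    exact P_notMem_Wlt hP k this
  have : G w - P (k+1) = z := by rw [hGweq, hc, one_smul]; abel
  rw [this]; exact hz'

lemma Gpow_monic (hP : LinearIndependent ℝ P)
    (hΔ0 : Δ (P 0) = 0) (hΔsucc : ∀ n, Δ (P (n + 1)) = P n)
    (hGinv : ∀ u ∈ Wtot P, Δ (G u) = u)
    (hGmap : ∀ n, ∀ u ∈ Wlt P (n + 1), G u ∈ Wlt P (n + 2)) (j : ℕ) :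
    ∀ (k : ℕ) {w : H}, w ∈ Wlt P (k+1) → w - P k ∈ Wlt P k →
      (G ^ j) w - P (k + j) ∈ Wlt P (k + j) := by
  induction j with
  | zero => intro k w _ hwm; simpa using hwm
  | succ j ih =>
      intro k w hw hwm
      have h1 : (G ^ (j+1)) w = G ((G ^ j) w) := by rw [pow_succ']; rfl
      have h2 : (G ^ j) w ∈ Wlt P (k + j + 1) := by
        have hmem : (G ^ j) w - P (k+j) ∈ Wlt P (k+j) := ih k hw hwm
        have : (G ^ j) w = ((G ^ j) w - P (k+j)) + P (k+j) := by abel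
        rw [this]
        exact add_mem (Wlt_mono (by omega) hmem) (P_mem_Wlt (k+j))
      have := G_monic hP hΔ0 hΔsucc hGinv hGmap (k+j) h2 (ih k hw hwm)
      rw [h1, show k + (j+1) = (k+j) + 1 from by omega]
      exact this

lemma span_p {p : ℕ → H}
    (hpm : ∀ n, p n - P n ∈ Wlt P n) :
    ∀ k, Wlt P k ≤ Submodule.span ℝ (p '' Set.Iio k) := by
  intro k
  induction k using Nat.strong_induction_on with
  | _ k ih =>
    rw [Wlt, Submodule.span_le]
    rintro x ⟨j, hj, rfl⟩
    simp only [Set.mem_Iio] at hj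
    have h1 : p j ∈ Submodule.span ℝ (p '' Set.Iio k) :=
      Submodule.subset_span ⟨j, hj, rfl⟩
    have h2 : p j - P j ∈ Submodule.span ℝ (p '' Set.Iio k) := by
      have := ih j hj (hpm j)
      exact Submodule.span_mono (Set.image_mono (fun x hx => lt_trans hx hj)) this
    have : P j = p j - (p j - P j) := by abel
    rw [this, SetLike.mem_coe]
    exact sub_mem h1 h2

lemma eq_zero_of_inner_span {s : Set H} {r : H} (h1 : r ∈ Submodule.span ℝ s)
    (h : ∀ x ∈ s, ⟪r, x⟫ = 0) : r = 0 := by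
  have key : ∀ v, v ∈ Submodule.span ℝ s → ⟪r, v⟫ = 0 := by
    intro v hv
    induction hv using Submodule.span_induction with
    | mem x hx => exact h x hx
    | zero => simp
    | add x y _ _ hx hy => rw [inner_add_right, hx, hy, add_zero]
    | smul a x _ hx => rw [real_inner_smul_right, hx, mul_zero]
  exact inner_self_eq_zero.mp (key r h1)

end Aux18

/-- Higher-order differential equation: for every `n ≥ m`,
`s̃_n + Σ_{l=1}^m χ_l Δ^{2l} s̃_n =
  Δ^m p_{n+m} + Σ_{l=1}^{2m} (⟨s̃_n, 𝒢^m p_{n+m−l}⟩_{Sᵐ}/‖p_{n+m−l}‖₂²) Δ^m p_{n+m−l}`. -/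
theorem statement18
    (P : ℕ → H) (hP : LinearIndependent ℝ P)
    (Δ G : H →ₗ[ℝ] H)
    (hΔ0 : Δ (P 0) = 0) (hΔsucc : ∀ n, Δ (P (n + 1)) = P n)
    (hGsym : ∀ u ∈ Wtot P, ∀ v ∈ Wtot P, ⟪ G u, v ⟫ = ⟪ u, G v ⟫)
    (hGinv : ∀ u ∈ Wtot P, Δ (G u) = u)
    (hGmap : ∀ n, ∀ u ∈ Wlt P (n + 1), G u ∈ Wlt P (n + 2))
    (m : ℕ) (hm : 1 ≤ m)
    (χ : ℕ → ℝ) (hχ0 : χ 0 = 1) (hχnn : ∀ ℓ, ℓ ≤ m → 0 ≤ χ ℓ)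
    (p st : ℕ → H)
    (hpmonic : ∀ n, p n - P n ∈ Wlt P n)
    (hportho : ∀ n, ∀ w ∈ Wlt P n, ⟪ p n, w ⟫ = 0)
    (hstmonic : ∀ n, st n - P n ∈ Wlt P n)
    (hstortho : ∀ n, ∀ w ∈ Wlt P n, innerSm Δ χ m (st n) w = 0) :
    ∀ n : ℕ, m ≤ n →
      st n + ∑ l ∈ Finset.Icc 1 m, χ l • (Δ ^ (2 * l)) (st n) =
        (Δ ^ m) (p (n + m)) +
        ∑ l ∈ Finset.Icc 1 (2 * m),
          (innerSm Δ χ m (st n) ((G ^ m) (p (n + m - l))) / ‖p (n + m - l)‖ ^ 2) •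
            (Δ ^ m) (p (n + m - l)) := by
  intro n hn
  -- basic memberships
  have hp_mem : ∀ j, p j ∈ Wlt P (j+1) := by
    intro j
    have : p j = (p j - P j) + P j := by abel
    rw [this]
    exact add_mem (Wlt_mono (by omega) (hpmonic j)) (P_mem_Wlt j)
  have hp_ne : ∀ j, p j ≠ 0 := by
    intro j hj0
    have : P j ∈ Wlt P j := by
      have := hpmonic j
      rw [hj0, zero_sub] at this
      simpa using neg_mem this
    exact P_notMem_Wlt hP j this
  have hst_mem : st n ∈ Wlt P (n+1) := by
    have : st n = (st n - P n) + P n := by abel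
    rw [this]
    exact add_mem (Wlt_mono (by omega) (hstmonic n)) (P_mem_Wlt n)
  have hst_tot : st n ∈ Wtot P := Wlt_le_Wtot _ hst_mem
  have hΔl_mem : ∀ l, l ≤ m → (Δ ^ l) (st n) ∈ Wlt P (n + 1 - l) := by
    intro l hl
    refine Deltapow_Wlt hΔ0 hΔsucc l (n + 1 - l) ?_
    rw [show n + 1 - l + l = n + 1 from by omega]
    exact hst_mem
  have hΔl_tot : ∀ l, (Δ ^ l) (st n) ∈ Wtot P := fun l =>
    Deltapow_Wtot hΔ0 hΔsucc l hst_tot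
  -- the auxiliary element u
  set u : H := ∑ l ∈ Finset.range (m+1), χ l • (G ^ (m - l)) ((Δ ^ l) (st n)) with hu_def
  have hrange : Finset.range (m+1) = insert 0 (Finset.Icc 1 m) := by
    ext x; simp; omega
  have hterm_mem : ∀ l, 1 ≤ l → l ≤ m →
      (G ^ (m - l)) ((Δ ^ l) (st n)) ∈ Wlt P (n + m) := by
    intro l h1 h2
    have := Gpow_Wlt hGmap (m - l) (n + 1 - l) (hΔl_mem l h2)
    exact Wlt_mono (by omega) this
  have hGm_monic : (G ^ m) (st n) - P (n + m) ∈ Wlt P (n + m) :=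
    Gpow_monic hP hΔ0 hΔsucc hGinv hGmap m n hst_mem (hstmonic n)
  have hu_monic : u - P (n + m) ∈ Wlt P (n + m) := by
    rw [hu_def, hrange, Finset.sum_insert (by simp)]
    have h0 : χ 0 • (G ^ (m - 0)) ((Δ ^ 0) (st n)) = (G ^ m) (st n) := by
      simp [hχ0]
    rw [h0]
    have : (G ^ m) (st n) + (∑ l ∈ Finset.Icc 1 m, χ l • (G ^ (m - l)) ((Δ ^ l) (st n)))
        - P (n + m) = ((G ^ m) (st n) - P (n + m)) +
        ∑ l ∈ Finset.Icc 1 m, χ l • (G ^ (m - l)) ((Δ ^ l) (st n)) := by abel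
    rw [this]
    refine add_mem hGm_monic (Submodule.sum_mem _ ?_)
    intro l hl
    simp only [Finset.mem_Icc] at hl
    exact Submodule.smul_mem _ _ (hterm_mem l hl.1 hl.2)
  have hu_mem : u ∈ Wlt P (n + m + 1) := by
    have : u = (u - P (n + m)) + P (n + m) := by abel
    rw [this]
    exact add_mem (Wlt_mono (by omega) hu_monic) (P_mem_Wlt (n + m))
  -- Δ^m u equals the LHS
  have hΔm_u : (Δ ^ m) u = st n + ∑ l ∈ Finset.Icc 1 m, χ l • (Δ ^ (2*l)) (st n) := by
    rw [hu_def, map_sum]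
    have hterm : ∀ l ∈ Finset.range (m+1),
        (Δ ^ m) (χ l • (G ^ (m - l)) ((Δ ^ l) (st n))) = χ l • (Δ ^ (2*l)) (st n) := by
      intro l hl
      simp only [Finset.mem_range] at hl
      have hlm : l ≤ m := by omega
      rw [map_smul]
      congr 1
      have hsplit : (Δ : H →ₗ[ℝ] H) ^ m = Δ ^ l * Δ ^ (m - l) := by
        rw [← pow_add]; congr 1; omega
      rw [hsplit, Module.End.mul_apply,
        DGpow hGmap hGinv (m - l) _ (hΔl_tot l)]
      rw [show 2 * l = l + l from by omega, pow_add, Module.End.mul_apply]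
    rw [Finset.sum_congr rfl hterm, hrange, Finset.sum_insert (by simp)]
    simp [hχ0]
  -- inner products of u with the p's
  have hup : ∀ j, ⟪u, p j⟫ = innerSm Δ χ m (st n) ((G ^ m) (p j)) := by
    intro j
    have hpj_tot : p j ∈ Wtot P := Wlt_le_Wtot _ (hp_mem j)
    rw [hu_def, sum_inner, innerSm]
    refine Finset.sum_congr rfl ?_
    intro l hl
    simp only [Finset.mem_range] at hl
    have hlm : l ≤ m := by omega
    rw [real_inner_smul_left]
    congr 1
    rw [DGpow_le hGmap hGinv hlm hpj_tot]
    exact Gsym_pow hGmap hGsym (m - l) _ (hΔl_tot l) _ hpj_tot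
  -- coefficients
  set c : ℕ → ℝ := fun l =>
    innerSm Δ χ m (st n) ((G ^ m) (p (n + m - l))) / ‖p (n + m - l)‖ ^ 2 with hc_def
  set r : H := u - p (n + m) - ∑ l ∈ Finset.Icc 1 (2*m), c l • p (n + m - l) with hr_def
  have hr_mem : r ∈ Wlt P (n + m) := by
    rw [hr_def]
    have h1 : u - p (n + m) = (u - P (n + m)) - (p (n + m) - P (n + m)) := by abel
    refine sub_mem (by rw [h1]; exact sub_mem hu_monic (hpmonic (n+m)))
      (Submodule.sum_mem _ ?_)
    intro l hl
    simp only [Finset.mem_Icc] at hl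
    refine Submodule.smul_mem _ _ (Wlt_mono ?_ (hp_mem (n + m - l)))
    omega
  -- orthogonality of r to all p j, j < n + m
  have hortho : ∀ j, j < n + m → ⟪r, p j⟫ = 0 := by
    intro j hj
    rw [hr_def, inner_sub_left, inner_sub_left, hup j,
      hportho (n+m) (p j) (Wlt_mono (by omega) (hp_mem j)), sum_inner]
    have hcross : ∀ l₀ j₀, l₀ ∈ Finset.Icc 1 (2*m) → n + m - l₀ ≠ j₀ → j₀ < n + m →
        ⟪p (n + m - l₀), p j₀⟫ = 0 := by
      intro l₀ j₀ hl₀ hne hj₀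
      simp only [Finset.mem_Icc] at hl₀
      rcases lt_or_gt_of_ne hne with hlt | hgt
      · rw [real_inner_comm]
        exact hportho j₀ _ (Wlt_mono (by omega) (hp_mem (n + m - l₀)))
      · exact hportho (n + m - l₀) _ (Wlt_mono (by omega) (hp_mem j₀))
    by_cases hcase : j + m < n
    · -- all cross terms vanish and the leading inner product vanishes
      have hsum : ∑ l ∈ Finset.Icc 1 (2*m), ⟪c l • p (n + m - l), p j⟫ = 0 := by
        refine Finset.sum_eq_zero ?_
        intro l hl
        rw [real_inner_smul_left, hcross l j hl (by simp at hl; omega) hj, mul_zero]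
      rw [hsum]
      have hGmp : (G ^ m) (p j) ∈ Wlt P n := by
        have := Gpow_Wlt hGmap m (j+1) (hp_mem j)
        exact Wlt_mono (by omega) this
      rw [hstortho n _ hGmp]
      ring
    · -- exactly one cross term survives
      push_neg at hcase
      set l₀ := n + m - j with hl₀_def
      have hl₀_mem : l₀ ∈ Finset.Icc 1 (2*m) := by simp [hl₀_def]; omega
      have hjl₀ : n + m - l₀ = j := by omega
      have hsum : ∑ l ∈ Finset.Icc 1 (2*m), ⟪c l • p (n + m - l), p j⟫
          = c l₀ * ‖p j‖ ^ 2 := by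
        rw [Finset.sum_eq_single_of_mem l₀ hl₀_mem]
        · rw [real_inner_smul_left, hjl₀, real_inner_self_eq_norm_sq]
        · intro l hl hne
          have hne' : n + m - l ≠ j := by simp at hl; omega
          rw [real_inner_smul_left, hcross l j hl hne' hj, mul_zero]
      rw [hsum]
      simp only [hc_def, hjl₀]
      rw [div_mul_cancel₀ _ (pow_ne_zero 2 (norm_ne_zero_iff.mpr (hp_ne j)))]
      ring
  -- r = 0
  have hr0 : r = 0 := by
    refine eq_zero_of_inner_span (span_p hpmonic (n + m) hr_mem) ?_
    rintro x ⟨j, hj, rfl⟩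
    exact hortho j (by simpa using hj)
  have hu_eq : u = p (n + m) + ∑ l ∈ Finset.Icc 1 (2*m), c l • p (n + m - l) := by
    have h3 : u - (p (n + m) + ∑ l ∈ Finset.Icc 1 (2*m), c l • p (n + m - l)) = 0 := by
      rw [← sub_sub, ← hr_def]; exact hr0
    exact sub_eq_zero.mp h3
  -- apply Δ^m
  have final := congrArg (Δ ^ m : H →ₗ[ℝ] H) hu_eq
  rw [hΔm_u, map_add, map_sum] at final
  rw [final]
  congr 1
  refine Finset.sum_congr rfl ?_
  intro l hl
  rw [map_smul]
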